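/- For all integers b ≥ k ≥ 1, every skewed b-Cantor comb of depth k has bandwidth at least k. -/

import Mathlib

open SimpleGraph Walk


/-- `layoutBandwidthLE G α b` means the layout `α` of `G` has bandwidth at most `b`. -/
def layoutBandwidthLE {V : Type} [Fintype V] (G : SimpleGraph V)
    (α : V ≃ Fin (Fintype.card V)) (b : ℕ) : Prop :=
  ∀ u v : V, G.Adj u v → |(α u : ℤ) - (α v : ℤ)| ≤ (b : ℤ)

/-- The bandwidth of a finite graph. -/
noncomputable def graphBandwidth {V : Type} [Fintype V] (G : SimpleGraph V) : ℕ :=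
  sInf {b | ∃ α : V ≃ Fin (Fintype.card V), layoutBandwidthLE G α b}

/-- `IsSkewedCantorComb b k V G x y` : the graph `G` on vertex type `V` is a skewed
`b`-Cantor comb of depth `k` with end vertices `x` and `y`.

Depth `1`: a single edge.  Depth `k+1`: two disjoint depth-`k` combs (induced on the
vertex sets `S` and `S'`) with end vertices `x, y` and `x', y'`, joined by a path `P`
of length at least `2` from `y` to `x'`, internally disjoint from `S ∪ S'`; a stray
path `Q` is attached at an internal vertex `v` of `P`, meeting the rest only in `v`
and having at least `2(b-1)d` vertices besides `v`, where `d` bounds the distance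
from `v` to every vertex of the backbone path `B` from `x` to `y'`; those pieces
cover all of `V`, and the comb is a tree (acyclic). -/
inductive IsSkewedCantorComb (b : ℕ) : ℕ → (V : Type) → SimpleGraph V → V → V → Prop
  | base (V : Type) (G : SimpleGraph V) (x y : V)
      (hadj : G.Adj x y) (hall : ∀ z : V, z = x ∨ z = y) :
      IsSkewedCantorComb b 1 V G x y
  | step (k : ℕ) (V : Type) (G : SimpleGraph V)
      (S S' : Set V) (x y x' y' : V)
      (hxS : x ∈ S) (hyS : y ∈ S) (hx'S' : x' ∈ S') (hy'S' : y' ∈ S')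
      (hdisj : Disjoint S S')
      (hS : IsSkewedCantorComb b k S (G.induce S) ⟨x, hxS⟩ ⟨y, hyS⟩)
      (hS' : IsSkewedCantorComb b k S' (G.induce S') ⟨x', hx'S'⟩ ⟨y', hy'S'⟩)
      (P : G.Walk y x') (hP : P.IsPath) (hPlen : 2 ≤ P.length)
      (hPint : ∀ w ∈ P.support, w ∈ S ∪ S' → w = y ∨ w = x')
      (v : V) (hvP : v ∈ P.support) (hvy : v ≠ y) (hvx' : v ≠ x')
      (z : V) (Q : G.Walk v z) (hQ : Q.IsPath)
      (hQdisj : ∀ w ∈ Q.support, (w ∈ S ∪ S' ∨ w ∈ P.support) → w = v)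
      (B : G.Walk x y') (hB : B.IsPath)
      (hBsupp : ∀ w ∈ B.support, w ∈ S ∪ S' ∨ w ∈ P.support)
      (d : ℕ) (hd : ∀ w ∈ B.support, G.dist v w ≤ d)
      (hQlen : 2 * (b - 1) * d ≤ Q.length)
      (hcover : ∀ w : V, w ∈ S ∨ w ∈ S' ∨ w ∈ P.support ∨ w ∈ Q.support)
      (hacyclic : G.IsAcyclic) :
      IsSkewedCantorComb b (k + 1) V G x y'

/-- Every skewed `b`-Cantor comb of depth `k` (with `1 ≤ k ≤ b`) has bandwidth at
least `k`. -/
private lemma walk_crossing {V : Type} {G : SimpleGraph V} (f : V → ℤ) (t : ℤ)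
    {a c : V} (R : G.Walk a c) {l h : V}
    (hl : l ∈ R.support) (hh : h ∈ R.support) (hlf : f l ≤ t) (hhf : t < f h) :
    ∃ u w, G.Adj u w ∧ u ∈ R.support ∧ w ∈ R.support ∧ f u ≤ t ∧ t < f w := by
  revert hl hh hlf hhf
  induction R generalizing l h with
  | nil =>
    intro hl hh hlf hhf
    simp only [support_nil, List.mem_singleton] at hl hh
    subst hl; subst hh; omega
  | @cons s s₁ c hadj R ih =>
    intro hl hh hlf hhf
    simp only [support_cons, List.mem_cons] at hl hh
    by_cases hs : f s ≤ t
    · by_cases hs₁ : t < f s₁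
      · exact ⟨s, s₁, hadj, by simp, by simp [start_mem_support], hs, hs₁⟩
      · rcases hh with rfl | hh
        · omega
        · obtain ⟨u, w, h1, h2, h3, h4, h5⟩ := ih (start_mem_support R) hh (by omega) hhf
          exact ⟨u, w, h1, by simp [h2], by simp [h3], h4, h5⟩
    · rcases hl with rfl | hl
      · omega
      · by_cases hs₁ : f s₁ ≤ t
        · exact ⟨s₁, s, hadj.symm, by simp [start_mem_support], by simp, hs₁, by omega⟩
        · obtain ⟨u, w, h1, h2, h3, h4, h5⟩ := ih hl (start_mem_support R) hlf (by omega)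
          exact ⟨u, w, h1, by simp [h2], by simp [h3], h4, h5⟩

private lemma walk_abs_le {V : Type} {G : SimpleGraph V} {f : V → ℤ} {β : ℤ}
    (hβ : 0 ≤ β) (hband : ∀ u w, G.Adj u w → |f u - f w| ≤ β)
    {a c : V} (R : G.Walk a c) : |f a - f c| ≤ β * R.length := by
  induction R with
  | nil => simp
  | @cons s s₁ c hadj R ih =>
    have h1 := hband s s₁ hadj
    have : |f s - f c| ≤ |f s - f s₁| + |f s₁ - f c| := abs_sub_le _ _ _
    simp only [length_cons]
    push_cast
    nlinarith [abs_nonneg (f s - f c)]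

private lemma isPath_append_of_inter {V : Type} {G : SimpleGraph V} {a b c : V}
    {p : G.Walk a b} {q : G.Walk b c} (hp : p.IsPath) (hq : q.IsPath)
    (hint : ∀ w, w ∈ p.support → w ∈ q.support → w = b) : (p.append q).IsPath := by
  rw [Walk.isPath_def, Walk.support_append]
  have hq' : q.support = b :: q.support.tail := q.support_eq_cons
  have hqn := hq.support_nodup
  rw [hq'] at hqn
  refine List.Nodup.append hp.support_nodup (List.Nodup.of_cons hqn) ?_
  intro w hwp hwq
  have hwmem : w ∈ q.support := by rw [hq']; exact List.mem_cons_of_mem _ hwq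
  have hwb := hint w hwp hwmem
  subst hwb
  exact (List.nodup_cons.mp hqn).1 hwq

private lemma comb_main {b k : ℕ} {V : Type} {G : SimpleGraph V} {x y : V}
    (hcomb : IsSkewedCantorComb b k V G x y) :
    ∀ (f : V → ℤ), Function.Injective f →
    ∀ β : ℤ, 0 ≤ β → β ≤ (b : ℤ) - 1 →
    (∀ u w : V, G.Adj u w → |f u - f w| ≤ β) →
    ∃ (t : ℤ) (W : G.Walk x y), W.IsPath ∧
      (∃ w1 ∈ W.support, f w1 ≤ t) ∧ (∃ w2 ∈ W.support, t < f w2) ∧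
      ∃ L H : Finset V, L.card = k ∧ H.card = k ∧
        (∀ u ∈ L, f u ≤ t ∧ ∃ w, G.Adj u w ∧ t < f w) ∧
        (∀ u ∈ H, t < f u ∧ ∃ w, G.Adj u w ∧ f w ≤ t) := by
  induction hcomb with
  | base Vb Gb xb yb hadj hall =>
    intro f hinj β hβ0 hβb hband
    rcases lt_or_gt_of_ne (fun h => hadj.ne (hinj h)) with hxy | hxy
    · refine ⟨f xb, Walk.cons hadj Walk.nil, by simp [hadj.ne], ⟨xb, by simp, le_refl _⟩,
        ⟨yb, by simp, hxy⟩, {xb}, {yb}, by simp, by simp, ?_, ?_⟩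
      · intro u hu; simp only [Finset.mem_singleton] at hu; subst hu
        exact ⟨le_refl _, yb, hadj, hxy⟩
      · intro u hu; simp only [Finset.mem_singleton] at hu; subst hu
        exact ⟨hxy, xb, hadj.symm, le_refl _⟩
    · refine ⟨f yb, Walk.cons hadj Walk.nil, by simp [hadj.ne], ⟨yb, by simp, le_refl _⟩,
        ⟨xb, by simp, hxy⟩, {yb}, {xb}, by simp, by simp, ?_, ?_⟩
      · intro u hu; simp only [Finset.mem_singleton] at hu; subst hu
        exact ⟨le_refl _, xb, hadj.symm, hxy⟩
      · intro u hu; simp only [Finset.mem_singleton] at hu; subst hu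
        exact ⟨hxy, yb, hadj, le_refl _⟩
  | step k V G S S' x y x' y' hxS hyS hx'S' hy'S' hdisj hS hS' P hP hPlen hPint v hvP hvy
      hvx' z Q hQ hQdisj B hB hBsupp d hd hQlen hcover hacyclic ihS ihS' =>
    intro f hinj β hβ0 hβb hband
    classical
    have hb1 : (1:ℤ) ≤ (b:ℤ) := by linarith
    have hbn : 1 ≤ b := by exact_mod_cast hb1
    have hynS' : y ∉ S' := fun hy => Set.disjoint_left.mp hdisj hyS hy
    have hxnS' : x ∉ S' := fun hx => Set.disjoint_left.mp hdisj hxS hx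
    have hx'nS : x' ∉ S := fun hx => Set.disjoint_left.mp hdisj hx hx'S'
    have hy'nS : y' ∉ S := fun hy => Set.disjoint_left.mp hdisj hy hy'S'
    have hvnS : v ∉ S := by
      intro hv
      rcases hPint v hvP (Or.inl hv) with rfl | rfl
      · exact hvy rfl
      · exact hvx' rfl
    have hvnS' : v ∉ S' := by
      intro hv
      rcases hPint v hvP (Or.inr hv) with rfl | rfl
      · exact hvy rfl
      · exact hvx' rfl
    obtain ⟨t1, W1c, hW1p, ⟨w1l, hw1lm, hw1lf⟩, ⟨w1h, hw1hm, hw1hf⟩, L1, H1, hL1c, hH1c,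
        hL1, hH1⟩ :=
      ihS (fun u => f u.val) (hinj.comp Subtype.val_injective) β hβ0 hβb
        (fun u w h => hband _ _ h)
    obtain ⟨t2, W2c, hW2p, ⟨w2l, hw2lm, hw2lf⟩, ⟨w2h, hw2hm, hw2hf⟩, L2, H2, hL2c, hH2c,
        hL2, hH2⟩ :=
      ihS' (fun u => f u.val) (hinj.comp Subtype.val_injective) β hβ0 hβb
        (fun u w h => hband _ _ h)
    let ι : G.induce S →g G := SimpleGraph.Hom.comap Subtype.val G
    let ι' : G.induce S' →g G := SimpleGraph.Hom.comap Subtype.val G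
    let W1 : G.Walk x y := W1c.map ι
    let W2 : G.Walk x' y' := W2c.map ι'
    have hW1 : W1.IsPath := Walk.map_isPath_of_injective Subtype.val_injective hW1p
    have hW2 : W2.IsPath := Walk.map_isPath_of_injective Subtype.val_injective hW2p
    have hW1S : ∀ w ∈ W1.support, w ∈ S := by
      intro w hw
      rw [show W1.support = _ from Walk.support_map ι W1c] at hw
      obtain ⟨a, _, rfl⟩ := List.mem_map.mp hw
      exact a.2
    have hW2S : ∀ w ∈ W2.support, w ∈ S' := by
      intro w hw
      rw [show W2.support = _ from Walk.support_map ι' W2c] at hw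
      obtain ⟨a, _, rfl⟩ := List.mem_map.mp hw
      exact a.2
    have hWmid : (P.append W2).IsPath := by
      refine isPath_append_of_inter hP hW2 fun w hwP hwW2 => ?_
      have hwS' : w ∈ S' := hW2S w hwW2
      rcases hPint w hwP (Or.inr hwS') with rfl | rfl
      · exact absurd hwS' hynS'
      · rfl
    let Wp : G.Walk x y' := W1.append (P.append W2)
    have hWp : Wp.IsPath := by
      refine isPath_append_of_inter hW1 hWmid fun w hw1 hwm => ?_
      have hwS : w ∈ S := hW1S w hw1
      rw [Walk.mem_support_append_iff] at hwm
      rcases hwm with hwP | hwW2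
      · rcases hPint w hwP (Or.inl hwS) with rfl | rfl
        · rfl
        · exact absurd hwS hx'nS
      · exact absurd (hW2S w hwW2) fun h => Set.disjoint_left.mp hdisj hwS h
    have hWpB : Wp = B := by
      have h := hacyclic.path_unique ⟨Wp, hWp⟩ ⟨B, hB⟩
      exact Subtype.mk_eq_mk.mp h
    have hfB : ∀ w ∈ B.support, |f w - f v| ≤ ((b:ℤ) - 1) * (d:ℤ) := by
      intro w hw
      have hreach : G.Reachable v w :=
        ⟨(P.takeUntil v hvP).reverse.append (W1.reverse.append (B.takeUntil w hw))⟩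
      obtain ⟨R, hR⟩ := hreach.exists_walk_length_eq_dist
      have h1 : |f v - f w| ≤ β * R.length := walk_abs_le hβ0 hband R
      have h2 : (R.length : ℤ) ≤ (d : ℤ) := by
        have := hd w hw
        rw [hR]
        exact_mod_cast this
      have h3 : (0:ℤ) ≤ (d:ℤ) := Int.natCast_nonneg d
      calc |f w - f v| = |f v - f w| := abs_sub_comm _ _
        _ ≤ β * R.length := h1
        _ ≤ β * (d:ℤ) := by nlinarith
        _ ≤ ((b:ℤ) - 1) * (d:ℤ) := by nlinarith
    set D : ℤ := ((b:ℤ) - 1) * (d:ℤ) with hDdef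
    have hdnn : (0:ℤ) ≤ (d:ℤ) := Int.natCast_nonneg d
    have hD0 : 0 ≤ D := by nlinarith
    have hesc : ∃ q ∈ Q.support, D < |f q - f v| := by
      by_contra hcon
      push_neg at hcon
      have hsub : ∀ u ∈ B.support.toFinset ∪ Q.support.toFinset,
          f u ∈ Finset.Icc (f v - D) (f v + D) := by
        intro u hu
        rw [Finset.mem_union, List.mem_toFinset, List.mem_toFinset] at hu
        have habs : |f u - f v| ≤ D := by
          rcases hu with hu | hu
          · exact hfB u hu
          · exact hcon u hu
        rw [abs_le] at habs
        rw [Finset.mem_Icc]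
        omega
      have hcard := Finset.card_le_card_of_injOn f hsub (Function.Injective.injOn hinj)
      have hIcc : (Finset.Icc (f v - D) (f v + D)).card = (2 * D + 1).toNat := by
        rw [Int.card_Icc]
        congr 1
        ring
      have hinter : B.support.toFinset ∩ Q.support.toFinset ⊆ {v} := by
        intro w hw
        rw [Finset.mem_inter, List.mem_toFinset, List.mem_toFinset] at hw
        rw [Finset.mem_singleton]
        exact hQdisj w hw.2 (hBsupp w hw.1)
      have hBcard : B.support.toFinset.card = B.length + 1 := by
        rw [List.toFinset_card_of_nodup hB.support_nodup, Walk.length_support]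
      have hQcard : Q.support.toFinset.card = Q.length + 1 := by
        rw [List.toFinset_card_of_nodup hQ.support_nodup, Walk.length_support]
      have hxy' : x ≠ y' := fun h => hy'nS (h ▸ hxS)
      have hBlen : 1 ≤ B.length := by
        rcases Nat.eq_zero_or_pos B.length with h0 | h0
        · exact absurd (Walk.eq_of_length_eq_zero h0) hxy'
        · exact h0
      have hunion := Finset.card_union_add_card_inter B.support.toFinset Q.support.toFinset
      have hints : (B.support.toFinset ∩ Q.support.toFinset).card ≤ 1 := by
        calc (B.support.toFinset ∩ Q.support.toFinset).card
            ≤ ({v} : Finset V).card := Finset.card_le_card hinter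
          _ = 1 := Finset.card_singleton v
      have hDnat : D = (((b - 1) * d : ℕ) : ℤ) := by
        rw [hDdef]
        push_cast [hbn]
        ring
      have htonat : (2 * D + 1).toNat = 2 * ((b-1) * d) + 1 := by
        rw [hDnat]
        omega
      rw [hIcc, htonat] at hcard
      have hQl : 2 * ((b - 1) * d) ≤ Q.length := by
        rw [← Nat.mul_assoc]
        exact hQlen
      omega
    obtain ⟨q, hqQ, hqD⟩ := hesc
    -- memberships of child witnesses in B.support
    have hW1mem : ∀ a : ↥S, a ∈ W1c.support → (a : V) ∈ W1.support := by
      intro a ha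
      rw [show W1.support = _ from Walk.support_map ι W1c]
      exact List.mem_map_of_mem ha
    have hW2mem : ∀ a : ↥S', a ∈ W2c.support → (a : V) ∈ W2.support := by
      intro a ha
      rw [show W2.support = _ from Walk.support_map ι' W2c]
      exact List.mem_map_of_mem ha
    have hW1Wp : ∀ w ∈ W1.support, w ∈ Wp.support := by
      intro w hw
      exact Walk.subset_support_append_left _ _ hw
    have hW2Wp : ∀ w ∈ W2.support, w ∈ Wp.support := by
      intro w hw
      refine Walk.subset_support_append_right _ _ ?_
      exact Walk.subset_support_append_right _ _ hw
    have hw1lWp : (w1l : V) ∈ Wp.support := hW1Wp _ (hW1mem _ hw1lm)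
    have hw1hWp : (w1h : V) ∈ Wp.support := hW1Wp _ (hW1mem _ hw1hm)
    have hw2lWp : (w2l : V) ∈ Wp.support := hW2Wp _ (hW2mem _ hw2lm)
    have hw2hWp : (w2h : V) ∈ Wp.support := hW2Wp _ (hW2mem _ hw2hm)
    have hw1lB : |f (w1l : V) - f v| ≤ D := hfB _ (hWpB ▸ hw1lWp)
    have hw1hB : |f (w1h : V) - f v| ≤ D := hfB _ (hWpB ▸ hw1hWp)
    have hw2lB : |f (w2l : V) - f v| ≤ D := hfB _ (hWpB ▸ hw2lWp)
    have hw2hB : |f (w2h : V) - f v| ≤ D := hfB _ (hWpB ▸ hw2hWp)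
    -- tail of P (drop the first vertex y)
    have hPnil : ¬ P.Nil := by
      rw [Walk.nil_iff_length_eq]
      omega
    have htailsupp : P.tail.support = P.support.tail :=
      Walk.support_tail_of_not_nil P hPnil
    have hPcons : P.support = y :: P.support.tail := P.support_eq_cons
    have hPnodup := hP.support_nodup
    have hyntail : y ∉ P.tail.support := by
      rw [htailsupp]
      rw [hPcons] at hPnodup
      exact (List.nodup_cons.mp hPnodup).1
    have hvtail : v ∈ P.tail.support := by
      rw [htailsupp]
      have hv2 := hvP
      rw [hPcons] at hv2
      rcases List.mem_cons.mp hv2 with h | h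
      · exact absurd h hvy
      · exact h
    have htailsub : ∀ w ∈ P.tail.support, w ∈ P.support := by
      intro w hw
      rw [htailsupp] at hw
      rw [hPcons]
      exact List.mem_cons_of_mem _ hw
    -- tail of P.reverse (drop the first vertex x')
    have hPrnil : ¬ P.reverse.Nil := by
      rw [Walk.nil_iff_length_eq, Walk.length_reverse]
      omega
    have hrtailsupp : P.reverse.tail.support = P.reverse.support.tail :=
      Walk.support_tail_of_not_nil _ hPrnil
    have hrcons : P.reverse.support = x' :: P.reverse.support.tail := Walk.support_eq_cons _
    have hPrnodup := hP.reverse.support_nodup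
    have hx'ntail : x' ∉ P.reverse.tail.support := by
      rw [hrtailsupp]
      rw [hrcons] at hPrnodup
      exact (List.nodup_cons.mp hPrnodup).1
    have hvrtail : v ∈ P.reverse.tail.support := by
      rw [hrtailsupp]
      have hv2 : v ∈ P.reverse.support := by
        rw [Walk.support_reverse]
        exact List.mem_reverse.mpr hvP
      rw [hrcons] at hv2
      rcases List.mem_cons.mp hv2 with h | h
      · exact absurd h hvx'
      · exact h
    have hrtailsub : ∀ w ∈ P.reverse.tail.support, w ∈ P.support := by
      intro w hw
      rw [hrtailsupp] at hw
      have : w ∈ P.reverse.support := by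
        rw [hrcons]
        exact List.mem_cons_of_mem _ hw
      rw [Walk.support_reverse] at this
      exact List.mem_reverse.mp this
    -- the two auxiliary walks
    let R1 : G.Walk (P.getVert 1) y' := P.tail.append W2
    let R2 : G.Walk (P.reverse.getVert 1) x := P.reverse.tail.append W1.reverse
    have hR1nS : ∀ w ∈ R1.support, w ∉ S := by
      intro w hw hwS
      rw [Walk.mem_support_append_iff] at hw
      rcases hw with hw | hw
      · rcases hPint w (htailsub w hw) (Or.inl hwS) with rfl | rfl
        · exact hyntail hw
        · exact hx'nS hwS
      · exact Set.disjoint_left.mp hdisj hwS (hW2S w hw)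
    have hR2nS' : ∀ w ∈ R2.support, w ∉ S' := by
      intro w hw hwS'
      rw [Walk.mem_support_append_iff] at hw
      rcases hw with hw | hw
      · rcases hPint w (hrtailsub w hw) (Or.inr hwS') with rfl | rfl
        · exact hynS' hwS'
        · exact hx'ntail hw
      · have : w ∈ W1.support := by
          rw [Walk.support_reverse] at hw
          exact List.mem_reverse.mp hw
        exact Set.disjoint_left.mp hdisj (hW1S w this) hwS'
    have hvR1 : v ∈ R1.support := Walk.subset_support_append_left _ _ hvtail
    have hvR2 : v ∈ R2.support := Walk.subset_support_append_left _ _ hvrtail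
    have hw2lR1 : (w2l : V) ∈ R1.support :=
      Walk.subset_support_append_right _ _ (hW2mem _ hw2lm)
    have hw2hR1 : (w2h : V) ∈ R1.support :=
      Walk.subset_support_append_right _ _ (hW2mem _ hw2hm)
    have hw1lR2 : (w1l : V) ∈ R2.support := by
      refine Walk.subset_support_append_right _ _ ?_
      rw [Walk.support_reverse]
      exact List.mem_reverse.mpr (hW1mem _ hw1lm)
    have hw1hR2 : (w1h : V) ∈ R2.support := by
      refine Walk.subset_support_append_right _ _ ?_
      rw [Walk.support_reverse]
      exact List.mem_reverse.mpr (hW1mem _ hw1hm)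
    have hQnS : ∀ w ∈ Q.support, w ∉ S := by
      intro w hw hwS
      have h := hQdisj w hw (Or.inl (Set.mem_union_left _ hwS))
      subst h
      exact hvnS hwS
    have hQnS' : ∀ w ∈ Q.support, w ∉ S' := by
      intro w hw hwS'
      have h := hQdisj w hw (Or.inl (Set.mem_union_right _ hwS'))
      subst h
      exact hvnS' hwS'
    -- the key claim: an extra crossing pair outside S at t1, or outside S' at t2
    have key : (∃ u w : V, G.Adj u w ∧ u ∉ S ∧ w ∉ S ∧ f u ≤ t1 ∧ t1 < f w) ∨
        (∃ u w : V, G.Adj u w ∧ u ∉ S' ∧ w ∉ S' ∧ f u ≤ t2 ∧ t2 < f w) := by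
      by_contra hcon
      push_neg at hcon
      obtain ⟨h1, h2⟩ := hcon
      rcases lt_abs.mp hqD with hqR | hqL
      · -- escape to the right : f v + D < f q
        have hfq : f v + D < f q := by omega
        have ht1v : t1 < f v := by
          by_contra hge
          push_neg at hge
          have hqhigh : t1 < f q := by
            have := abs_le.mp hw1hB
            omega
          obtain ⟨u, w, hadj, huQ, hwQ, hu, hw⟩ :=
            walk_crossing f t1 Q Q.start_mem_support hqQ hge hqhigh
          have := h1 u w hadj (hQnS u huQ) (hQnS w hwQ) hu
          omega
        have ht2v : t2 < f v := by
          by_contra hge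
          push_neg at hge
          have hqhigh : t2 < f q := by
            have := abs_le.mp hw2hB
            omega
          obtain ⟨u, w, hadj, huQ, hwQ, hu, hw⟩ :=
            walk_crossing f t2 Q Q.start_mem_support hqQ hge hqhigh
          have := h2 u w hadj (hQnS' u huQ) (hQnS' w hwQ) hu
          omega
        have hR1high : ∀ w ∈ R1.support, t1 < f w := by
          intro w hw
          by_contra hle
          push_neg at hle
          obtain ⟨u, w', hadj, huR, hwR, hu, hw'⟩ :=
            walk_crossing f t1 R1 hw hvR1 hle ht1v
          have := h1 u w' hadj (hR1nS u huR) (hR1nS w' hwR) hu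
          omega
        have hR2high : ∀ w ∈ R2.support, t2 < f w := by
          intro w hw
          by_contra hle
          push_neg at hle
          obtain ⟨u, w', hadj, huR, hwR, hu, hw'⟩ :=
            walk_crossing f t2 R2 hw hvR2 hle ht2v
          have := h2 u w' hadj (hR2nS' u huR) (hR2nS' w' hwR) hu
          omega
        have hA := hR1high _ hw2lR1
        have hB2 := hR2high _ hw1lR2
        omega
      · -- escape to the left : f q < f v - D
        have hfq : f q < f v - D := by omega
        have ht1v : f v ≤ t1 := by
          by_contra hlt
          push_neg at hlt
          have hqlow : f q ≤ t1 := by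
            have := abs_le.mp hw1lB
            omega
          obtain ⟨u, w, hadj, huQ, hwQ, hu, hw⟩ :=
            walk_crossing f t1 Q hqQ Q.start_mem_support hqlow hlt
          have := h1 u w hadj (hQnS u huQ) (hQnS w hwQ) hu
          omega
        have ht2v : f v ≤ t2 := by
          by_contra hlt
          push_neg at hlt
          have hqlow : f q ≤ t2 := by
            have := abs_le.mp hw2lB
            omega
          obtain ⟨u, w, hadj, huQ, hwQ, hu, hw⟩ :=
            walk_crossing f t2 Q hqQ Q.start_mem_support hqlow hlt
          have := h2 u w hadj (hQnS' u huQ) (hQnS' w hwQ) hu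
          omega
        have hR1low : ∀ w ∈ R1.support, f w ≤ t1 := by
          intro w hw
          by_contra hgt
          push_neg at hgt
          obtain ⟨u, w', hadj, huR, hwR, hu, hw'⟩ :=
            walk_crossing f t1 R1 hvR1 hw ht1v hgt
          have := h1 u w' hadj (hR1nS u huR) (hR1nS w' hwR) hu
          omega
        have hR2low : ∀ w ∈ R2.support, f w ≤ t2 := by
          intro w hw
          by_contra hgt
          push_neg at hgt
          obtain ⟨u, w', hadj, huR, hwR, hu, hw'⟩ :=
            walk_crossing f t2 R2 hvR2 hw ht2v hgt
          have := h2 u w' hadj (hR2nS' u huR) (hR2nS' w' hwR) hu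
          omega
        have hA := hR1low _ hw2hR1
        have hB2 := hR2low _ hw1hR2
        omega
    -- conclude
    rcases key with ⟨u, w, hadj, huS, hwS, hu, hw⟩ | ⟨u, w, hadj, huS', hwS', hu, hw⟩
    · refine ⟨t1, Wp, hWp, ⟨(w1l : V), hw1lWp, hw1lf⟩, ⟨(w1h : V), hw1hWp, hw1hf⟩,
        insert u (L1.map ⟨Subtype.val, Subtype.val_injective⟩),
        insert w (H1.map ⟨Subtype.val, Subtype.val_injective⟩), ?_, ?_, ?_, ?_⟩
      · rw [Finset.card_insert_of_notMem, Finset.card_map, hL1c]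
        intro hmem
        obtain ⟨a, _, rfl⟩ := Finset.mem_map.mp hmem
        exact huS a.2
      · rw [Finset.card_insert_of_notMem, Finset.card_map, hH1c]
        intro hmem
        obtain ⟨a, _, rfl⟩ := Finset.mem_map.mp hmem
        exact hwS a.2
      · intro u' hu'
        rcases Finset.mem_insert.mp hu' with rfl | hu'
        · exact ⟨hu, w, hadj, hw⟩
        · obtain ⟨a, ha, rfl⟩ := Finset.mem_map.mp hu'
          obtain ⟨hfa, wa, hwa, hfwa⟩ := hL1 a ha
          exact ⟨hfa, (wa : V), hwa, hfwa⟩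
      · intro u' hu'
        rcases Finset.mem_insert.mp hu' with rfl | hu'
        · exact ⟨hw, u, hadj.symm, hu⟩
        · obtain ⟨a, ha, rfl⟩ := Finset.mem_map.mp hu'
          obtain ⟨hfa, wa, hwa, hfwa⟩ := hH1 a ha
          exact ⟨hfa, (wa : V), hwa, hfwa⟩
    · refine ⟨t2, Wp, hWp, ⟨(w2l : V), hw2lWp, hw2lf⟩, ⟨(w2h : V), hw2hWp, hw2hf⟩,
        insert u (L2.map ⟨Subtype.val, Subtype.val_injective⟩),
        insert w (H2.map ⟨Subtype.val, Subtype.val_injective⟩), ?_, ?_, ?_, ?_⟩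
      · rw [Finset.card_insert_of_notMem, Finset.card_map, hL2c]
        intro hmem
        obtain ⟨a, _, rfl⟩ := Finset.mem_map.mp hmem
        exact huS' a.2
      · rw [Finset.card_insert_of_notMem, Finset.card_map, hH2c]
        intro hmem
        obtain ⟨a, _, rfl⟩ := Finset.mem_map.mp hmem
        exact hwS' a.2
      · intro u' hu'
        rcases Finset.mem_insert.mp hu' with rfl | hu'
        · exact ⟨hu, w, hadj, hw⟩
        · obtain ⟨a, ha, rfl⟩ := Finset.mem_map.mp hu'
          obtain ⟨hfa, wa, hwa, hfwa⟩ := hL2 a ha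
          exact ⟨hfa, (wa : V), hwa, hfwa⟩
      · intro u' hu'
        rcases Finset.mem_insert.mp hu' with rfl | hu'
        · exact ⟨hw, u, hadj.symm, hu⟩
        · obtain ⟨a, ha, rfl⟩ := Finset.mem_map.mp hu'
          obtain ⟨hfa, wa, hwa, hfwa⟩ := hH2 a ha
          exact ⟨hfa, (wa : V), hwa, hfwa⟩

theorem skewedCantorComb_bandwidth_ge {b k : ℕ} (hk : 1 ≤ k) (hkb : k ≤ b)
    {V : Type} [Fintype V] (G : SimpleGraph V) (x y : V)
    (h : IsSkewedCantorComb b k V G x y) :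
    k ≤ graphBandwidth G := by
  have hne : {m | ∃ α : V ≃ Fin (Fintype.card V), layoutBandwidthLE G α m}.Nonempty := by
    refine ⟨Fintype.card V, Fintype.equivFin V, ?_⟩
    intro u v _
    have h1 : (((Fintype.equivFin V) u : Fin (Fintype.card V)) : ℤ) < Fintype.card V := by
      exact_mod_cast ((Fintype.equivFin V) u).isLt
    have h2 : (((Fintype.equivFin V) v : Fin (Fintype.card V)) : ℤ) < Fintype.card V := by
      exact_mod_cast ((Fintype.equivFin V) v).isLt
    have h3 : (0:ℤ) ≤ (((Fintype.equivFin V) u : Fin (Fintype.card V)) : ℤ) := by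
      exact_mod_cast Nat.zero_le _
    have h4 : (0:ℤ) ≤ (((Fintype.equivFin V) v : Fin (Fintype.card V)) : ℤ) := by
      exact_mod_cast Nat.zero_le _
    rw [abs_le]
    omega
  refine le_csInf hne ?_
  intro m hm
  obtain ⟨α, hα⟩ := hm
  by_cases hbm : b ≤ m
  · omega
  · push_neg at hbm
    have hmb : (m : ℤ) ≤ (b : ℤ) - 1 := by
      have h' : ((m:ℤ)) + 1 ≤ (b:ℤ) := by exact_mod_cast hbm
      omega
    have hinj : Function.Injective (fun u : V => ((α u : Fin (Fintype.card V)) : ℤ)) := by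
      intro u v huv
      simp only at huv
      have : (α u : Fin (Fintype.card V)) = α v := by
        have := @Int.natCast_inj (α u) (α v)
        exact Fin.ext (by exact_mod_cast huv)
      exact α.injective this
    obtain ⟨t, W, _, _, _, L, H, hLc, _, hL, _⟩ :=
      comb_main h (fun u : V => ((α u : Fin (Fintype.card V)) : ℤ)) hinj m
        (Int.natCast_nonneg m) hmb (fun u w ha => hα u w ha)
    have hsub : ∀ u ∈ L, ((α u : Fin (Fintype.card V)) : ℤ) ∈ Finset.Icc (t + 1 - m) t := by
      intro u hu
      obtain ⟨h1, w, hw, h2⟩ := hL u hu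
      have h3 := hα u w hw
      rw [abs_le] at h3
      rw [Finset.mem_Icc]
      constructor
      · omega
      · exact h1
    have hcard := Finset.card_le_card_of_injOn _ hsub (Function.Injective.injOn hinj)
    rw [hLc, Int.card_Icc] at hcard
    omega
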